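/- Let A be a nontrivial arrangement of d lines with intersection points p_1,...,p_r. Define for each line L_j the incidence vector v_j ∈ Q^r with i-th coordinate 1 if p_i ∈ L_j and 0 otherwise. Then the vectors v_1,...,v_d are linearly independent over Q. -/

import Mathlib

open scoped BigOperators

/-- Points and lines of the projective plane over `k` (lines via duality). -/
abbrev ProjPlane (k : Type*) [Field k] := Projectivization k (Fin 3 → k)

/-- Incidence between a point `p` and a line `L` (given by its dual coefficients):
all representatives pair to zero under the standard bilinear form. -/
def Incid {k : Type*} [Field k] (p L : ProjPlane k) : Prop :=
  ∀ v ∈ p.submodule, ∀ w ∈ L.submodule, ∑ i, v i * w i = 0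

/-- Number of lines of the arrangement `A` passing through the point `p`. -/
noncomputable def linesThrough {k : Type*} [Field k]
    (A : Finset (ProjPlane k)) (p : ProjPlane k) : ℕ :=
  {L : ProjPlane k | L ∈ A ∧ Incid p L}.ncard

/-- `tm A m` is the number of `m`-points of the arrangement `A`. -/
noncomputable def tm {k : Type*} [Field k]
    (A : Finset (ProjPlane k)) (m : ℕ) : ℕ :=
  {p : ProjPlane k | linesThrough A p = m}.ncard

/-- The arrangement is trivial if all its lines pass through a common point. -/
def IsTrivial {k : Type*} [Field k] (A : Finset (ProjPlane k)) : Prop :=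
  ∃ p : ProjPlane k, ∀ L ∈ A, Incid p L

/-- First Chern number of a line arrangement. -/
noncomputable def c1sq {k : Type*} [Field k] (A : Finset (ProjPlane k)) : ℤ :=
  9 - 5 * (A.card : ℤ) +
    ∑ m ∈ Finset.Icc 2 A.card, (3 * (m : ℤ) - 4) * (tm A m : ℤ)

/-- Second Chern number of a line arrangement. -/
noncomputable def c2 {k : Type*} [Field k] (A : Finset (ProjPlane k)) : ℤ :=
  3 - 2 * (A.card : ℤ) +
    ∑ m ∈ Finset.Icc 2 A.card, ((m : ℤ) - 1) * (tm A m : ℤ)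

namespace StmtAux

open Projectivization Module Submodule

variable {k : Type*} [Field k]

/-- The standard dot-product bilinear form on `Fin 3 → k`. -/
noncomputable def B (k : Type*) [Field k] : LinearMap.BilinForm k (Fin 3 → k) :=
  Matrix.toBilin' (1 : Matrix (Fin 3) (Fin 3) k)

lemma B_apply (x y : Fin 3 → k) : B k x y = ∑ i, x i * y i := by
  simp [B, Matrix.toBilin'_apply', dotProduct]

lemma B_nondegenerate : (B k).Nondegenerate :=
  (Matrix.nondegenerate_of_det_ne_zero (by simp)).toBilin'

lemma B_refl : (B k).IsRefl := by
  intro x y h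
  rw [B_apply] at h ⊢
  simpa [mul_comm] using h

lemma incid_mk_mk (x y : Fin 3 → k) (hx : x ≠ 0) (hy : y ≠ 0) :
    Incid (Projectivization.mk k x hx) (Projectivization.mk k y hy) ↔ ∑ i, x i * y i = 0 := by
  constructor
  · intro h
    exact h x (by simp [Projectivization.submodule_mk, Submodule.mem_span_singleton_self])
      y (by simp [Projectivization.submodule_mk, Submodule.mem_span_singleton_self])
  · intro h v hv w hw
    rw [Projectivization.submodule_mk] at hv hw
    obtain ⟨a, rfl⟩ := Submodule.mem_span_singleton.mp hv
    obtain ⟨b, rfl⟩ := Submodule.mem_span_singleton.mp hw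
    have : ∀ i, (a • x) i * (b • y) i = a * b * (x i * y i) := by
      intro i; simp [mul_comm, mul_left_comm, mul_assoc]
    rw [Finset.sum_congr rfl fun i _ => this i, ← Finset.mul_sum, h, mul_zero]

lemma incid_iff (p L : ProjPlane k) : Incid p L ↔ ∑ i, p.rep i * L.rep i = 0 := by
  conv_lhs => rw [← p.mk_rep, ← L.mk_rep]
  exact incid_mk_mk _ _ _ _

/-- Existence of a common point of two lines. -/
lemma exists_meet (L M : ProjPlane k) : ∃ p : ProjPlane k, Incid p L ∧ Incid p M := by
  set φ : (Fin 3 → k) →ₗ[k] k × k := ((B k).flip L.rep).prod ((B k).flip M.rep) with hφ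
  have hker : LinearMap.ker φ ≠ ⊥ := by
    intro h
    have hinj := LinearMap.ker_eq_bot.mp h
    have := LinearMap.finrank_le_finrank_of_injective hinj
    simp [Module.finrank_prod] at this
  obtain ⟨x, hxker, hx⟩ := Submodule.exists_mem_ne_zero_of_ne_bot hker
  have h1 : B k x L.rep = 0 := by
    have := congrArg Prod.fst (LinearMap.mem_ker.mp hxker)
    simpa [φ] using this
  have h2 : B k x M.rep = 0 := by
    have := congrArg Prod.snd (LinearMap.mem_ker.mp hxker)
    simpa [φ] using this
  refine ⟨Projectivization.mk k x hx, ?_, ?_⟩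
  · rw [← L.mk_rep]; rw [incid_mk_mk]; rw [← B_apply]; exact h1
  · rw [← M.mk_rep]; rw [incid_mk_mk]; rw [← B_apply]; exact h2

/-- Uniqueness of the common point of two distinct lines. -/
lemma meet_unique {L M p q : ProjPlane k} (hLM : L ≠ M)
    (hpL : Incid p L) (hpM : Incid p M) (hqL : Incid q L) (hqM : Incid q M) : p = q := by
  have hli : LinearIndependent k ![L.rep, M.rep] := by
    rw [linearIndependent_fin2]
    refine ⟨M.rep_nonzero, fun a ha => hLM ?_⟩
    have : Projectivization.mk k L.rep L.rep_nonzero = Projectivization.mk k M.rep M.rep_nonzero :=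
      (Projectivization.mk_eq_mk_iff' k _ _ _ _).mpr ⟨a, by simpa using ha⟩
    rw [Projectivization.mk_rep, Projectivization.mk_rep] at this
    exact this
  set W : Submodule k (Fin 3 → k) := Submodule.span k (Set.range ![L.rep, M.rep]) with hW
  have hWrank : finrank k W = 2 := by
    rw [hW, finrank_span_eq_card hli]
    simp
  have key : ∀ (N r : ProjPlane k), Incid r N → (B k) N.rep r.rep = 0 := by
    intro N r h
    rw [B_apply]
    have h2 := (incid_iff r N).mp h
    rw [← h2]
    exact Finset.sum_congr rfl fun i _ => mul_comm _ _
  have hmem : ∀ r : ProjPlane k, Incid r L → Incid r M → r.rep ∈ (B k).orthogonal W := by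
    intro r hrL hrM
    rw [LinearMap.BilinForm.mem_orthogonal_iff]
    intro u hu
    have hsub : W ≤ LinearMap.ker ((B k).flip r.rep) := by
      rw [hW, Submodule.span_le]
      rintro w ⟨i, rfl⟩
      simp only [SetLike.mem_coe, LinearMap.mem_ker, LinearMap.flip_apply]
      fin_cases i
      · simpa using key L r hrL
      · simpa using key M r hrM
    exact hsub hu
  have hOrank : finrank k ((B k).orthogonal W) = 1 := by
    rw [LinearMap.BilinForm.finrank_orthogonal B_nondegenerate W, hWrank]
    simp
  have hple : (k ∙ p.rep) ≤ (B k).orthogonal W := by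
    rw [Submodule.span_le, Set.singleton_subset_iff]
    exact hmem p hpL hpM
  have heq : (k ∙ p.rep) = (B k).orthogonal W := by
    apply Submodule.eq_of_le_of_finrank_le hple
    rw [hOrank, finrank_span_singleton p.rep_nonzero]
  have hq : q.rep ∈ (k ∙ p.rep) := heq ▸ hmem q hqL hqM
  obtain ⟨a, ha⟩ := Submodule.mem_span_singleton.mp hq
  have h3 : Projectivization.mk k q.rep q.rep_nonzero = Projectivization.mk k p.rep p.rep_nonzero :=
    (Projectivization.mk_eq_mk_iff' k _ _ _ _).mpr ⟨a, ha⟩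
  rw [Projectivization.mk_rep, Projectivization.mk_rep] at h3
  exact h3.symm

end StmtAux

open scoped Classical in
/-- The incidence vectors (over ℚ) of the lines of a nontrivial arrangement,
indexed by the intersection points of the arrangement, are linearly independent. -/
theorem stmt_2 {k : Type*} [Field k] (A : Finset (ProjPlane k))
    (hd : 2 ≤ A.card) (hnt : ¬ IsTrivial A) :
    LinearIndependent ℚ
      (fun (L : A) (p : {p : ProjPlane k // 2 ≤ linesThrough A p}) =>
        if Incid p.1 L.1 then (1 : ℚ) else 0) := by
  classical
  -- intersection points with multiplicity ≥ 2
  have hmeetPt : ∀ L M : ProjPlane k, L ∈ A → M ∈ A → L ≠ M →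
      ∃ p : {p : ProjPlane k // 2 ≤ linesThrough A p}, Incid p.1 L ∧ Incid p.1 M := by
    intro L M hL hM hLM
    obtain ⟨p, hpL, hpM⟩ := StmtAux.exists_meet L M
    have hfin : {N : ProjPlane k | N ∈ A ∧ Incid p N}.Finite :=
      A.finite_toSet.subset fun N hN => hN.1
    have hsub : ({L, M} : Set (ProjPlane k)) ⊆ {N | N ∈ A ∧ Incid p N} := by
      rintro N (rfl | rfl)
      exacts [⟨hL, hpL⟩, ⟨hM, hpM⟩]
    have h2 : 2 ≤ linesThrough A p := by
      have := Set.ncard_le_ncard hsub hfin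
      rwa [Set.ncard_pair hLM] at this
    exact ⟨⟨p, h2⟩, hpL, hpM⟩
  have htwo : ∀ p : {p : ProjPlane k // 2 ≤ linesThrough A p},
      ∃ L M, L ∈ A ∧ M ∈ A ∧ L ≠ M ∧ Incid p.1 L ∧ Incid p.1 M := by
    rintro ⟨p, hp⟩
    have hfin : {N : ProjPlane k | N ∈ A ∧ Incid p N}.Finite :=
      A.finite_toSet.subset fun N hN => hN.1
    obtain ⟨L, hL, M, hM, hLM⟩ :=
      (Set.one_lt_ncard hfin).mp (lt_of_lt_of_le one_lt_two hp)
    exact ⟨L, M, hL.1, hM.1, hLM, hL.2, hM.2⟩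
  haveI hfinPt : Finite {p : ProjPlane k // 2 ≤ linesThrough A p} := by
    set f : {p : ProjPlane k // 2 ≤ linesThrough A p} → {s // s ∈ A.powerset} :=
      fun p => ⟨A.filter (fun L => Incid p.1 L), Finset.mem_powerset.mpr (Finset.filter_subset _ _)⟩
      with hf
    have hinj : Function.Injective f := by
      intro p q hpq
      obtain ⟨L, M, hL, hM, hLM, hpL, hpM⟩ := htwo p
      have hLp : L ∈ A.filter (fun N => Incid p.1 N) := Finset.mem_filter.mpr ⟨hL, hpL⟩
      have hMp : M ∈ A.filter (fun N => Incid p.1 N) := Finset.mem_filter.mpr ⟨hM, hpM⟩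
      have hfe : A.filter (fun N => Incid p.1 N) = A.filter (fun N => Incid q.1 N) :=
        congrArg Subtype.val hpq
      rw [hfe] at hLp hMp
      exact Subtype.ext (StmtAux.meet_unique hLM hpL hpM
        (Finset.mem_filter.mp hLp).2 (Finset.mem_filter.mp hMp).2)
    exact Finite.of_injective f hinj
  haveI : Fintype {p : ProjPlane k // 2 ≤ linesThrough A p} := Fintype.ofFinite _
  set Pt := {p : ProjPlane k // 2 ≤ linesThrough A p} with hPt
  set v : ↥A → Pt → ℚ := fun L p => if Incid p.1 L.1 then 1 else 0 with hv
  rw [Fintype.linearIndependent_iff]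
  intro g hg L₀
  have hgp : ∀ p : Pt, ∑ L : ↥A, g L * v L p = 0 := by
    intro p
    have := congrFun hg p
    simpa [Finset.sum_apply] using this
  have hGoff : ∀ L M : ↥A, L.1 ≠ M.1 →
      (∑ p : Pt, v L p * v M p) = 1 := by
    intro L M hLM
    obtain ⟨p₀, hp₀L, hp₀M⟩ := hmeetPt L.1 M.1 L.2 M.2 hLM
    have hiff : ∀ p : Pt, (Incid p.1 L.1 ∧ Incid p.1 M.1) ↔ p = p₀ := by
      intro p
      constructor
      · rintro ⟨h1, h2⟩
        exact Subtype.ext (StmtAux.meet_unique hLM h1 h2 hp₀L hp₀M)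
      · rintro rfl
        exact ⟨hp₀L, hp₀M⟩
    have : ∀ p : Pt, v L p * v M p = if p = p₀ then 1 else 0 := by
      intro p
      by_cases h1 : Incid p.1 L.1 <;> by_cases h2 : Incid p.1 M.1
      · simp [hv, h1, h2, (hiff p).mp ⟨h1, h2⟩, hp₀L, hp₀M]
      · have hne : p ≠ p₀ := fun e => h2 ((hiff p).mpr e).2
        simp [hv, h1, h2, hne]
      · have hne : p ≠ p₀ := fun e => h1 ((hiff p).mpr e).1
        simp [hv, h1, h2, hne]
      · have hne : p ≠ p₀ := fun e => h1 ((hiff p).mpr e).1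
        simp [hv, h1, h2, hne]
    rw [Finset.sum_congr rfl fun p _ => this p]
    rw [Finset.sum_ite_eq']
    simp
  have hdiag : ∀ L : ↥A, (2:ℚ) ≤ ∑ p : Pt, v L p * v L p := by
    intro L
    obtain ⟨M, hM, hML⟩ := Finset.exists_mem_ne hd L.1
    obtain ⟨p, hpL, _⟩ := hmeetPt L.1 M L.2 hM (Ne.symm hML)
    rw [IsTrivial] at hnt
    push_neg at hnt
    obtain ⟨N, hN, hpN⟩ := hnt p.1
    have hNL : N ≠ L.1 := fun h => hpN (h ▸ hpL)
    obtain ⟨q, hqL, hqN⟩ := hmeetPt L.1 N L.2 hN (Ne.symm hNL)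
    have hpq : p ≠ q := fun h => hpN (h ▸ hqN)
    have hterm : ∀ r : Pt, (0:ℚ) ≤ v L r * v L r := fun r => mul_self_nonneg _
    calc (2:ℚ) = ∑ x ∈ ({p, q} : Finset Pt), v L x * v L x := by
          rw [Finset.sum_pair hpq, hv]
          simp only
          rw [if_pos hpL, if_pos hqL]
          norm_num
      _ ≤ ∑ r : Pt, v L r * v L r :=
          Finset.sum_le_sum_of_subset_of_nonneg (Finset.subset_univ _)
            (fun r _ _ => hterm r)
  have key : (0:ℚ) = ∑ L : ↥A, ∑ M : ↥A, g L * g M * (∑ p : Pt, v L p * v M p) := by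
    calc (0:ℚ) = ∑ p : Pt, (∑ L : ↥A, g L * v L p) * (∑ M : ↥A, g M * v M p) := by
          simp only [hgp, zero_mul, Finset.sum_const_zero]
      _ = ∑ L : ↥A, ∑ M : ↥A, g L * g M * ∑ p : Pt, v L p * v M p := by
          simp_rw [Finset.sum_mul, Finset.mul_sum]
          rw [Finset.sum_comm]
          refine Finset.sum_congr rfl fun L _ => ?_
          rw [Finset.sum_comm]
          refine Finset.sum_congr rfl fun M _ => ?_
          exact Finset.sum_congr rfl fun p _ => by ring
  have hsplit : ∀ L M : ↥A, g L * g M * (∑ p : Pt, v L p * v M p) =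
      g L * g M + (if L = M then g L * g L * ((∑ p : Pt, v L p * v L p) - 1) else 0) := by
    intro L M
    by_cases h : L = M
    · subst h
      rw [if_pos rfl]
      ring
    · rw [if_neg h, hGoff L M (fun hh => h (Subtype.ext hh)), mul_one, add_zero]
  have key2 : (0:ℚ) = (∑ L : ↥A, g L) * (∑ L : ↥A, g L) +
      ∑ L : ↥A, g L * g L * ((∑ p : Pt, v L p * v L p) - 1) := by
    rw [key, Finset.sum_congr rfl fun L _ => Finset.sum_congr rfl fun M _ => hsplit L M]
    rw [Finset.sum_congr rfl fun L (_ : L ∈ Finset.univ) => Finset.sum_add_distrib]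
    rw [Finset.sum_add_distrib, Finset.sum_mul_sum]
    congr 1
    refine Finset.sum_congr rfl fun L _ => ?_
    rw [Finset.sum_ite_eq]
    simp
  have htnonneg : ∀ L ∈ (Finset.univ : Finset ↥A),
      (0:ℚ) ≤ g L * g L * ((∑ p : Pt, v L p * v L p) - 1) := by
    intro L _
    have := hdiag L
    have h1 : (0:ℚ) ≤ (∑ p : Pt, v L p * v L p) - 1 := by linarith
    exact mul_nonneg (mul_self_nonneg _) h1
  have hzero : ∑ L : ↥A, g L * g L * ((∑ p : Pt, v L p * v L p) - 1) = 0 := by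
    have h1 : (0:ℚ) ≤ (∑ L : ↥A, g L) * (∑ L : ↥A, g L) := mul_self_nonneg _
    have h2 : (0:ℚ) ≤ ∑ L : ↥A, g L * g L * ((∑ p : Pt, v L p * v L p) - 1) :=
      Finset.sum_nonneg htnonneg
    linarith [key2]
  have hL₀ := (Finset.sum_eq_zero_iff_of_nonneg htnonneg).mp hzero L₀ (Finset.mem_univ _)
  have hd₀ := hdiag L₀
  rcases mul_eq_zero.mp hL₀ with h | h
  · exact mul_self_eq_zero.mp h
  · exfalso
    linarith
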